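/- For the Grandparent graph GP with height function h(k,f) = k: the automorphism group Aut(GP) acts transitively on the vertices of GP; h is Aut(GP)-difference-invariant, i.e. h(γv) − h(γu) = h(v) − h(u) for every automorphism γ of GP and all vertices u,v; and every vertex has a neighbour of strictly smaller height and a neighbour of strictly larger height. Consequently (h, Aut(GP)) is a graph height function on GP. -/

import Mathlib

open Filter Finset

noncomputable section

variable {V : Type*}

/-- `w : ℕ → V` represents a walk of length `n` from `v`: consecutive vertices are
adjacent and the values are pinned to `w n` from index `n` on. -/
noncomputable def IsWalkFrom (G : SimpleGraph V) (n : ℕ) (v : V) (w : ℕ → V) : Prop :=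
  w 0 = v ∧ (∀ i < n, G.Adj (w i) (w (i + 1))) ∧ (∀ i, n ≤ i → w i = w n)

/-- A self-avoiding walk of length `n` starting at `v`. -/
noncomputable def IsSAWFrom (G : SimpleGraph V) (n : ℕ) (v : V) (w : ℕ → V) : Prop :=
  IsWalkFrom G n v w ∧ Set.InjOn w (Set.Iic n)

/-- A bridge with respect to the height function `h`. -/
noncomputable def IsBridgeFrom (G : SimpleGraph V) (h : V → ℤ) (n : ℕ) (v : V) (w : ℕ → V) : Prop :=
  IsSAWFrom G n v w ∧ ∀ i, 1 ≤ i → i ≤ n → h (w 0) < h (w i) ∧ h (w i) ≤ h (w n)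

/-- A reversed bridge with respect to the height function `h`. -/
noncomputable def IsRBridgeFrom (G : SimpleGraph V) (h : V → ℤ) (n : ℕ) (v : V) (w : ℕ → V) : Prop :=
  IsSAWFrom G n v w ∧ ∀ i, 1 ≤ i → i ≤ n → h (w 0) > h (w i) ∧ h (w i) ≥ h (w n)

/-- A half-space walk with respect to the height function `h`. -/
noncomputable def IsHSWFrom (G : SimpleGraph V) (h : V → ℤ) (n : ℕ) (v : V) (w : ℕ → V) : Prop :=
  IsSAWFrom G n v w ∧ ∀ i, 1 ≤ i → i ≤ n → h (w 0) < h (w i)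

/-- The span of (the first `n+1` vertices of) a walk. -/
noncomputable def walkSpan (h : V → ℤ) (n : ℕ) (w : ℕ → V) : ℤ :=
  ((Finset.range (n + 1)).sup' ⟨0, by simp⟩ fun i => h (w i)) -
    ((Finset.range (n + 1)).inf' ⟨0, by simp⟩ fun i => h (w i))

/-- Number of SAWs of length `n` starting at `v`. -/
noncomputable def sawCount (G : SimpleGraph V) (n : ℕ) (v : V) : ℕ :=
  Nat.card {w : ℕ → V // IsSAWFrom G n v w}

/-- Number of bridges of length `n` starting at `v`. -/
noncomputable def bridgeCount (G : SimpleGraph V) (h : V → ℤ) (n : ℕ) (v : V) : ℕ :=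
  Nat.card {w : ℕ → V // IsBridgeFrom G h n v w}

/-- Number of reversed bridges of length `n` starting at `v`. -/
noncomputable def rbridgeCount (G : SimpleGraph V) (h : V → ℤ) (n : ℕ) (v : V) : ℕ :=
  Nat.card {w : ℕ → V // IsRBridgeFrom G h n v w}

/-- Number of half-space walks of length `n` starting at `v`. -/
noncomputable def hswCount (G : SimpleGraph V) (h : V → ℤ) (n : ℕ) (v : V) : ℕ :=
  Nat.card {w : ℕ → V // IsHSWFrom G h n v w}

/-- Number of bridges of length `n` and span `a` starting at `v`. -/
noncomputable def bridgeSpanCount (G : SimpleGraph V) (h : V → ℤ) (n : ℕ) (v : V) (a : ℤ) : ℕ :=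
  Nat.card {w : ℕ → V // IsBridgeFrom G h n v w ∧ walkSpan h n w = a}

/-- Number of reversed bridges of length `n` and span `a` starting at `v`. -/
noncomputable def rbridgeSpanCount (G : SimpleGraph V) (h : V → ℤ) (n : ℕ) (v : V) (a : ℤ) : ℕ :=
  Nat.card {w : ℕ → V // IsRBridgeFrom G h n v w ∧ walkSpan h n w = a}

/-- `c_n`: maximal number of SAWs of length `n` over all starting vertices. -/
noncomputable def sawSup (G : SimpleGraph V) (n : ℕ) : ℕ :=
  sSup {m | ∃ v : V, m = sawCount G n v}

/-- `b_n`: minimal number of bridges of length `n` over all starting vertices. -/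
noncomputable def bridgeInf (G : SimpleGraph V) (h : V → ℤ) (n : ℕ) : ℕ :=
  sInf {m | ∃ v : V, m = bridgeCount G h n v}

/-- `b̄_n`: minimal number of reversed bridges of length `n` over all starting vertices. -/
noncomputable def rbridgeInf (G : SimpleGraph V) (h : V → ℤ) (n : ℕ) : ℕ :=
  sInf {m | ∃ v : V, m = rbridgeCount G h n v}

/-- `idx` together with the spans `a` form the canonical decomposition of the walk `w`
of length `n` into an alternating sequence of `k` bridges and reversed bridges. -/
noncomputable def IsCanonicalDecomp (h : V → ℤ) (n : ℕ) (w : ℕ → V) (k : ℕ) (a : ℕ → ℤ)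
    (idx : ℕ → ℕ) : Prop :=
  idx 0 = 0 ∧ idx k = n ∧
  ∀ j, 1 ≤ j → j ≤ k →
    idx (j - 1) < idx j ∧ idx j ≤ n ∧
    a j = |h (w (idx j)) - h (w (idx (j - 1)))| ∧
    (∀ i, idx (j - 1) ≤ i → i ≤ n → |h (w i) - h (w (idx (j - 1)))| ≤ a j) ∧
    (∀ i, idx j < i → i ≤ n → |h (w i) - h (w (idx (j - 1)))| < a j)

/-- `h_{n,v}(a_1,…,a_k)`: number of half-space walks of length `n` from `v` whose
canonical decomposition has span sequence `a 1, …, a k`. -/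
noncomputable def hswSeqCount (G : SimpleGraph V) (h : V → ℤ) (n : ℕ) (v : V) (k : ℕ)
    (a : ℕ → ℤ) : ℕ :=
  Nat.card {w : ℕ → V // IsHSWFrom G h n v w ∧ ∃ idx : ℕ → ℕ,
    IsCanonicalDecomp h n w k a idx}

/-- The group `Γ` acts quasi-transitively. -/
noncomputable def QuasiTransitiveSub (G : SimpleGraph V) (Γ : Subgroup (G ≃g G)) : Prop :=
  ∃ S : Finset V, ∀ v : V, ∃ γ ∈ Γ, ∃ s ∈ S, γ s = v

/-- The graph `G` is quasi-transitive. -/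
noncomputable def QuasiTransitive (G : SimpleGraph V) : Prop :=
  ∃ S : Finset V, ∀ v : V, ∃ γ : G ≃g G, ∃ s ∈ S, γ s = v

/-- `(h, Γ)` is a graph height function on `G`. -/
noncomputable def IsGraphHeightFunction (G : SimpleGraph V) (h : V → ℤ) (Γ : Subgroup (G ≃g G)) : Prop :=
  QuasiTransitiveSub G Γ ∧
  (∀ γ ∈ Γ, ∀ u v : V, h (γ v) - h (γ u) = h v - h u) ∧
  (∀ v : V, ∃ u w : V, G.Adj v u ∧ G.Adj v w ∧ h u < h v ∧ h v < h w)

/-- `P_D A`: number of partitions of `A` into distinct parts. -/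
noncomputable def distinctPartitionCount (A : ℕ) : ℕ := (Nat.Partition.distincts A).card

noncomputable def bridgeBeta (G : SimpleGraph V) (h : V → ℤ) : ℝ :=
  Filter.limsup (fun n : ℕ => (bridgeInf G h n : ℝ) ^ (1 / (n : ℝ))) atTop

noncomputable def rbridgeBeta (G : SimpleGraph V) (h : V → ℤ) : ℝ :=
  Filter.limsup (fun n : ℕ => (rbridgeInf G h n : ℝ) ^ (1 / (n : ℝ))) atTop

noncomputable def betaMax (G : SimpleGraph V) (h : V → ℤ) : ℝ :=
  max (bridgeBeta G h) (rbridgeBeta G h)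
/-- Vertices of the Grandparent graph: pairs `(k, f)` where `f i = false` for `i ≥ k`
and for all sufficiently small `i`. -/
def GPVertex : Type :=
  {p : ℤ × (ℤ → Bool) // (∀ i, p.1 ≤ i → p.2 i = false) ∧ ∃ N : ℤ, ∀ i ≤ N, p.2 i = false}

/-- The predecessor map of the Grandparent graph. -/
def GPpred (v : GPVertex) : GPVertex :=
  ⟨(v.val.1 - 1, fun i => if i = v.val.1 - 1 then false else v.val.2 i), by
    constructor
    · intro i hi
      dsimp only at hi ⊢
      split
      · rfl
      · exact v.prop.1 i (by omega)
    · obtain ⟨N, hN⟩ := v.prop.2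
      refine ⟨N, fun i hi => ?_⟩
      dsimp only
      split
      · rfl
      · exact hN i hi⟩

/-- The Grandparent graph. -/
def GP : SimpleGraph GPVertex where
  Adj u v := u ≠ v ∧
    (u = GPpred v ∨ v = GPpred u ∨ u = GPpred (GPpred v) ∨ v = GPpred (GPpred u))
  symm := by
    constructor
    intro u v hv
    exact ⟨Ne.symm hv.1, by tauto⟩
  loopless := by
    constructor
    intro u hu
    exact hu.1 rfl

/-- The height of a vertex of the Grandparent graph. -/
def GPheight (v : GPVertex) : ℤ := v.val.1

namespace GPaux

abbrev ht (v : GPVertex) : ℤ := v.val.1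
abbrev fn (v : GPVertex) : ℤ → Bool := v.val.2

lemma fn_eq_false (v : GPVertex) {i : ℤ} (h : ht v ≤ i) : fn v i = false := v.prop.1 i h

lemma ht_pred (v : GPVertex) : ht (GPpred v) = ht v - 1 := rfl
lemma fn_pred (v : GPVertex) (i : ℤ) :
    fn (GPpred v) i = if i = ht v - 1 then false else fn v i := rfl

lemma ext' {u v : GPVertex} (h1 : ht u = ht v) (h2 : ∀ i, fn u i = fn v i) : u = v := by
  apply Subtype.ext
  exact Prod.ext h1 (funext h2)

lemma ne_of_ht {u v : GPVertex} (h : ht u ≠ ht v) : u ≠ v := fun h' => h (by rw [h'])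

def child (b : Bool) (v : GPVertex) : GPVertex :=
  ⟨(v.val.1 + 1, fun i => if i = v.val.1 then b else v.val.2 i), by
    constructor
    · intro i hi
      dsimp only at hi ⊢
      rw [if_neg (by omega)]
      exact v.prop.1 i (by omega)
    · obtain ⟨N, hN⟩ := v.prop.2
      refine ⟨min N (v.val.1 - 1), fun i hi => ?_⟩
      dsimp only
      rw [if_neg (by omega)]
      exact hN i (by omega)⟩

lemma ht_child (b : Bool) (v : GPVertex) : ht (child b v) = ht v + 1 := rfl
lemma fn_child (b : Bool) (v : GPVertex) (i : ℤ) :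
    fn (child b v) i = if i = ht v then b else fn v i := rfl

lemma pred_child (b : Bool) (v : GPVertex) : GPpred (child b v) = v := by
  apply ext'
  · show ht v + 1 - 1 = ht v; ring
  · intro i
    show (if i = ht v + 1 - 1 then false else if i = ht v then b else fn v i) = fn v i
    by_cases hi : i = ht v
    · simp [hi, (fn_eq_false v (le_refl _)).symm]
    · rw [if_neg (by omega), if_neg hi]

lemma child_ne_child {b b' : Bool} {u v : GPVertex} (h : ht u = ht v) (hb : b ≠ b') :
    child b u ≠ child b' v := by
  intro he
  apply hb
  have := congrArg (fun w => fn w (ht u)) he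
  simpa [fn_child, h] using this

lemma eq_child_of_pred {w v : GPVertex} (h : GPpred w = v) : w = child (fn w (ht v)) v := by
  have hh : ht v = ht w - 1 := by rw [← h]; rfl
  apply ext'
  · rw [ht_child]; omega
  · intro i
    rw [fn_child]
    by_cases hi : i = ht v
    · rw [if_pos hi, hi]
    · rw [if_neg hi, ← h, fn_pred, if_neg (by omega)]

end GPaux
namespace GPaux

lemma adj_pred (v : GPVertex) : GP.Adj v (GPpred v) :=
  ⟨ne_of_ht (by rw [ht_pred]; omega), Or.inr (Or.inl rfl)⟩

lemma adj_pred2 (v : GPVertex) : GP.Adj v (GPpred (GPpred v)) :=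
  ⟨ne_of_ht (by rw [ht_pred, ht_pred]; omega), Or.inr (Or.inr (Or.inr rfl))⟩

lemma adj_child (b : Bool) (v : GPVertex) : GP.Adj v (child b v) :=
  ⟨ne_of_ht (by rw [ht_child]; omega), Or.inl (pred_child b v).symm⟩

lemma adj_child2 (b0 b1 : Bool) (v : GPVertex) : GP.Adj v (child b1 (child b0 v)) :=
  ⟨ne_of_ht (by rw [ht_child, ht_child]; omega),
    Or.inr (Or.inr (Or.inl (by rw [pred_child, pred_child])))⟩

lemma adj_ht {u v : GPVertex} (h : GP.Adj u v) :
    ht u = ht v + 1 ∨ ht u = ht v - 1 ∨ ht u = ht v + 2 ∨ ht u = ht v - 2 := by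
  rcases h.2 with h1 | h1 | h1 | h1 <;>
    [ (have := congrArg ht h1; rw [ht_pred] at this; omega);
      (have := congrArg ht h1; rw [ht_pred] at this; omega);
      (have := congrArg ht h1; rw [ht_pred, ht_pred] at this; omega);
      (have := congrArg ht h1; rw [ht_pred, ht_pred] at this; omega)]

lemma adj_cases {v w : GPVertex} (h : GP.Adj v w) :
    w = GPpred v ∨ w = GPpred (GPpred v) ∨ (∃ b, w = child b v) ∨
      ∃ b0 b1, w = child b1 (child b0 v) := by
  rcases h.2 with h1 | h1 | h1 | h1
  · -- v = GPpred w : w is a child of v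
    exact Or.inr (Or.inr (Or.inl ⟨_, eq_child_of_pred h1.symm⟩))
  · exact Or.inl h1
  · -- v = GPpred (GPpred w)
    have hc : GPpred (GPpred w) = v := h1.symm
    have h2 : GPpred w = child (fn (GPpred w) (ht v)) v := eq_child_of_pred hc
    refine Or.inr (Or.inr (Or.inr ⟨fn (GPpred w) (ht v), fn w (ht (GPpred w)), ?_⟩))
    rw [← h2]
    exact eq_child_of_pred rfl
  · exact Or.inr (Or.inl h1)

lemma common_g {v a : GPVertex} (h1 : GP.Adj v a) (h2 : GP.Adj (GPpred (GPpred v)) a) :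
    a = GPpred v := by
  have hh := adj_ht h2
  rw [ht_pred, ht_pred] at hh
  rcases adj_cases h1 with h | h | ⟨b, h⟩ | ⟨b0, b1, h⟩
  · exact h
  · subst h; rw [ht_pred, ht_pred] at hh; omega
  · subst h; rw [ht_child] at hh; omega
  · subst h; rw [ht_child, ht_child] at hh; omega

lemma common_cc {v a : GPVertex} (b0 b1 : Bool) (h1 : GP.Adj v a)
    (h2 : GP.Adj (child b1 (child b0 v)) a) : a = child b0 v := by
  have hh := adj_ht h2
  rw [ht_child, ht_child] at hh
  rcases adj_cases h1 with h | h | ⟨b, h⟩ | ⟨b0', b1', h⟩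
  · subst h; rw [ht_pred] at hh; omega
  · subst h; rw [ht_pred, ht_pred] at hh; omega
  · -- a = child b v; show child b v = child b0 v via adjacency structure
    subst h
    rcases h2.2 with h3 | h3 | h3 | h3
    · have := congrArg ht h3; rw [ht_child, ht_child, ht_pred, ht_child] at this; omega
    · rw [h3, pred_child]
    · have := congrArg ht h3
      rw [ht_child, ht_child, ht_pred, ht_pred, ht_child] at this; omega
    · have := congrArg ht h3
      rw [ht_child, ht_pred, ht_pred, ht_child, ht_child] at this; omega
  · subst h; rw [ht_child, ht_child] at hh; omega

def Deg3 (v x : GPVertex) : Prop :=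
  ∃ a b c : GPVertex, a ≠ b ∧ a ≠ c ∧ b ≠ c ∧
    GP.Adj v a ∧ GP.Adj x a ∧ GP.Adj v b ∧ GP.Adj x b ∧ GP.Adj v c ∧ GP.Adj x c

lemma deg3_child (b : Bool) (v : GPVertex) : Deg3 v (child b v) := by
  refine ⟨GPpred v, child false (child b v), child true (child b v),
    ne_of_ht (by rw [ht_pred, ht_child, ht_child]; omega),
    ne_of_ht (by rw [ht_pred, ht_child, ht_child]; omega),
    child_ne_child rfl (by simp),
    adj_pred v, ?_, adj_child2 b false v, adj_child false (child b v),
    adj_child2 b true v, adj_child true (child b v)⟩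
  -- GP.Adj (child b v) (GPpred v)
  exact ⟨ne_of_ht (by rw [ht_child, ht_pred]; omega),
    Or.inr (Or.inr (Or.inr (by rw [pred_child])))⟩

lemma not_deg3_g (v : GPVertex) : ¬ Deg3 v (GPpred (GPpred v)) := by
  rintro ⟨a, b, c, hab, _, _, hva, hga, hvb, hgb, _, _⟩
  exact hab ((common_g hva hga).trans (common_g hvb hgb).symm)

lemma not_deg3_cc (b0 b1 : Bool) (v : GPVertex) : ¬ Deg3 v (child b1 (child b0 v)) := by
  rintro ⟨a, b, c, hab, _, _, hva, hga, hvb, hgb, _, _⟩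
  exact hab ((common_cc b0 b1 hva hga).trans (common_cc b0 b1 hvb hgb).symm)

end GPaux
namespace GPaux

def Phi (v w : GPVertex) : Prop :=
  GP.Adj v w ∧ ∃ x y : GPVertex, x ≠ y ∧ GP.Adj v x ∧ GP.Adj v y ∧
    GP.Adj w x ∧ GP.Adj w y ∧ Deg3 v x ∧ Deg3 v y

lemma phi_holds (v : GPVertex) : Phi v (GPpred v) := by
  refine ⟨adj_pred v, child false v, child true v, child_ne_child rfl (by simp),
    adj_child false v, adj_child true v, ?_, ?_, deg3_child false v, deg3_child true v⟩
  · exact ⟨ne_of_ht (by rw [ht_pred, ht_child]; omega),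
      Or.inr (Or.inr (Or.inl (by rw [pred_child])))⟩
  · exact ⟨ne_of_ht (by rw [ht_pred, ht_child]; omega),
      Or.inr (Or.inr (Or.inl (by rw [pred_child])))⟩

lemma phi_unique {v w : GPVertex} (h : Phi v w) : w = GPpred v := by
  obtain ⟨hadj, x, y, hxy, hvx, hvy, hwx, hwy, hdx, hdy⟩ := h
  rcases adj_cases hadj with hw | hw | ⟨b, hw⟩ | ⟨b0, b1, hw⟩
  · exact hw
  · subst hw
    exact absurd ((common_g hvx hwx).trans (common_g hvy hwy).symm) hxy
  · subst hw
    -- x and y must be GPpred v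
    have key : ∀ z : GPVertex, GP.Adj v z → GP.Adj (child b v) z → Deg3 v z → z = GPpred v := by
      intro z hvz hwz hdz
      have hh := adj_ht hwz
      rw [ht_child] at hh
      rcases adj_cases hvz with h | h | ⟨b', h⟩ | ⟨b0', b1', h⟩
      · exact h
      · subst h; rw [ht_pred, ht_pred] at hh; omega
      · subst h; rw [ht_child] at hh; omega
      · subst h; exact absurd hdz (not_deg3_cc b0' b1' v)
    exact absurd ((key x hvx hwx hdx).trans (key y hvy hwy hdy).symm) hxy
  · subst hw
    exact absurd ((common_cc b0 b1 hvx hwx).trans (common_cc b0 b1 hvy hwy).symm) hxy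

lemma phi_map (γ : GP ≃g GP) {v w : GPVertex} (h : Phi v w) : Phi (γ v) (γ w) := by
  obtain ⟨hadj, x, y, hxy, hvx, hvy, hwx, hwy, hdx, hdy⟩ := h
  have mapadj : ∀ a b : GPVertex, GP.Adj a b → GP.Adj (γ a) (γ b) := fun a b hab =>
    γ.map_adj_iff.mpr hab
  have mapd : ∀ a b : GPVertex, Deg3 a b → Deg3 (γ a) (γ b) := by
    rintro a b ⟨p, q, r, hpq, hpr, hqr, h1, h2, h3, h4, h5, h6⟩
    exact ⟨γ p, γ q, γ r, fun he => hpq (γ.injective he), fun he => hpr (γ.injective he),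
      fun he => hqr (γ.injective he), mapadj _ _ h1, mapadj _ _ h2, mapadj _ _ h3,
      mapadj _ _ h4, mapadj _ _ h5, mapadj _ _ h6⟩
  exact ⟨mapadj _ _ hadj, γ x, γ y, fun he => hxy (γ.injective he), mapadj _ _ hvx,
    mapadj _ _ hvy, mapadj _ _ hwx, mapadj _ _ hwy, mapd _ _ hdx, mapd _ _ hdy⟩

lemma pred_commute (γ : GP ≃g GP) (v : GPVertex) : γ (GPpred v) = GPpred (γ v) :=
  phi_unique (phi_map γ (phi_holds v))

end GPaux
namespace GPaux

lemma pred_iter (a : ℕ) (v : GPVertex) :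
    ht (GPpred^[a] v) = ht v - a ∧
      ∀ i, fn (GPpred^[a] v) i = if ht v - a ≤ i then false else fn v i := by
  induction a with
  | zero =>
    refine ⟨by simp, fun i => ?_⟩
    simp only [Function.iterate_zero, id_eq, Nat.cast_zero, sub_zero]
    split
    · exact fn_eq_false v (by omega)
    · rfl
  | succ n ih =>
    rw [Function.iterate_succ_apply']
    refine ⟨by rw [ht_pred, ih.1]; push_cast; ring, fun i => ?_⟩
    rw [fn_pred, ih.1, ih.2]
    push_cast
    split <;> split <;> first | rfl | omega | (split <;> first | rfl | omega)

lemma merge (u v : GPVertex) : ∃ a b : ℕ, GPpred^[a] u = GPpred^[b] v := by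
  obtain ⟨Nu, hNu⟩ := u.prop.2
  obtain ⟨Nv, hNv⟩ := v.prop.2
  set M : ℤ := min (min Nu Nv) (min (ht u) (ht v)) with hM
  refine ⟨(ht u - M).toNat, (ht v - M).toNat, ?_⟩
  have hu : (((ht u - M).toNat : ℤ)) = ht u - M := Int.toNat_of_nonneg (by omega)
  have hv : (((ht v - M).toNat : ℤ)) = ht v - M := Int.toNat_of_nonneg (by omega)
  obtain ⟨h1, h2⟩ := pred_iter (ht u - M).toNat u
  obtain ⟨h3, h4⟩ := pred_iter (ht v - M).toNat v
  apply ext'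
  · rw [h1, h3, hu, hv]; ring
  · intro i
    rw [h2, h4, hu, hv]
    have e1 : ht u - (ht u - M) = M := by ring
    have e2 : ht v - (ht v - M) = M := by ring
    rw [e1, e2]
    split
    · rfl
    · exact (hNu i (by omega)).trans (hNv i (by omega)).symm

lemma iter_commute (γ : GP ≃g GP) (a : ℕ) (v : GPVertex) :
    γ (GPpred^[a] v) = GPpred^[a] (γ v) := by
  induction a with
  | zero => rfl
  | succ n ih =>
    rw [Function.iterate_succ_apply', Function.iterate_succ_apply', pred_commute, ih]

lemma diff_invariant (γ : GP ≃g GP) (u v : GPVertex) :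
    GPheight (γ v) - GPheight (γ u) = GPheight v - GPheight u := by
  obtain ⟨a, b, hab⟩ := merge u v
  have h1 : ht (GPpred^[a] u) = ht u - a := (pred_iter a u).1
  have h2 : ht (GPpred^[b] v) = ht v - b := (pred_iter b v).1
  have h3 : ht (GPpred^[a] (γ u)) = ht (γ u) - a := (pred_iter a (γ u)).1
  have h4 : ht (GPpred^[b] (γ v)) = ht (γ v) - b := (pred_iter b (γ v)).1
  have e1 : ht u - a = ht v - b := by rw [← h1, ← h2, hab]
  have hab' : GPpred^[a] (γ u) = GPpred^[b] (γ v) := by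
    rw [← iter_commute, ← iter_commute, hab]
  have e2 : ht (γ u) - a = ht (γ v) - b := by rw [← h3, ← h4, hab']
  show ht (γ v) - ht (γ u) = ht v - ht u
  omega

end GPaux
namespace GPaux

lemma adj_of_commute {e : GPVertex → GPVertex} (hi : Function.Injective e)
    (hc : ∀ x, e (GPpred x) = GPpred (e x)) {a b : GPVertex} (h : GP.Adj a b) :
    GP.Adj (e a) (e b) := by
  refine ⟨fun h' => h.1 (hi h'), ?_⟩
  rcases h.2 with h1 | h1 | h1 | h1
  · exact Or.inl (by rw [h1, hc])
  · exact Or.inr (Or.inl (by rw [h1, hc]))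
  · exact Or.inr (Or.inr (Or.inl (by rw [h1, hc, hc])))
  · exact Or.inr (Or.inr (Or.inr (by rw [h1, hc, hc])))

def isoOfCommute (e : GPVertex ≃ GPVertex) (hc : ∀ x, e (GPpred x) = GPpred (e x)) :
    GP ≃g GP where
  toEquiv := e
  map_rel_iff' := by
    intro a b
    have hc' : ∀ x, e.symm (GPpred x) = GPpred (e.symm x) := by
      intro x
      conv_lhs => rw [← e.apply_symm_apply x]
      rw [← hc, e.symm_apply_apply]
    constructor
    · intro h
      have := adj_of_commute e.symm.injective hc' h
      simpa using this
    · exact adj_of_commute e.injective hc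

def transFun (u v : GPVertex) (x : GPVertex) : GPVertex :=
  ⟨(x.val.1 + (v.val.1 - u.val.1), fun i =>
      if i < x.val.1 + (v.val.1 - u.val.1) then
        xor (x.val.2 (i - (v.val.1 - u.val.1)))
          (xor (u.val.2 (i - (v.val.1 - u.val.1))) (v.val.2 i))
      else false), by
    constructor
    · intro i hi
      dsimp only at hi ⊢
      rw [if_neg (by omega)]
    · obtain ⟨Nx, hNx⟩ := x.prop.2
      obtain ⟨Nu, hNu⟩ := u.prop.2
      obtain ⟨Nv, hNv⟩ := v.prop.2
      refine ⟨min (min (Nx + (v.val.1 - u.val.1)) (Nu + (v.val.1 - u.val.1))) Nv,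
        fun i hi => ?_⟩
      dsimp only
      split
      · rw [hNx _ (by omega), hNu _ (by omega), hNv _ (by omega)]
        rfl
      · rfl⟩

lemma transFun_ht (u v x : GPVertex) : ht (transFun u v x) = ht x + (ht v - ht u) := rfl

lemma transFun_fn (u v x : GPVertex) (i : ℤ) :
    fn (transFun u v x) i =
      if i < ht x + (ht v - ht u) then
        xor (fn x (i - (ht v - ht u))) (xor (fn u (i - (ht v - ht u))) (fn v i))
      else false := rfl

lemma transFun_inv (u v x : GPVertex) : transFun v u (transFun u v x) = x := by
  apply ext'
  · rw [transFun_ht, transFun_ht]; ring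
  · intro i
    rw [transFun_fn, transFun_ht]
    by_cases hi : i < ht x
    · rw [if_pos (by omega), transFun_fn]
      rw [if_pos (by omega)]
      have e1 : i - (ht u - ht v) - (ht v - ht u) = i := by ring
      rw [e1]
      cases fn x i <;> cases fn u i <;> cases fn v (i - (ht u - ht v)) <;> rfl
    · rw [if_neg (by omega), fn_eq_false x (by omega)]

def transEquiv (u v : GPVertex) : GPVertex ≃ GPVertex :=
  ⟨transFun u v, transFun v u, transFun_inv u v, transFun_inv v u⟩

lemma transFun_pred (u v x : GPVertex) :
    transFun u v (GPpred x) = GPpred (transFun u v x) := by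
  apply ext'
  · rw [transFun_ht, ht_pred, ht_pred, transFun_ht]; ring
  · intro i
    simp only [transFun_fn, fn_pred, transFun_ht, ht_pred]
    by_cases h1 : i < ht x - 1 + (ht v - ht u) <;> by_cases h2 : i - (ht v - ht u) = ht x - 1 <;>
      by_cases h3 : i = ht x + (ht v - ht u) - 1 <;> by_cases h4 : i < ht x + (ht v - ht u) <;>
      simp (disch := omega) only [if_pos, if_neg] <;> first | rfl | omega

lemma transFun_maps (u v : GPVertex) : transFun u v u = v := by
  apply ext'
  · rw [transFun_ht]; ring
  · intro i
    rw [transFun_fn]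
    split
    · cases hu : fn u (i - (ht v - ht u)) <;> cases hv : fn v i <;> rfl
    · exact (fn_eq_false v (by omega)).symm

def transIso (u v : GPVertex) : GP ≃g GP :=
  isoOfCommute (transEquiv u v) (transFun_pred u v)

lemma transIso_maps (u v : GPVertex) : transIso u v u = v := transFun_maps u v

end GPaux

def GPv0 : GPVertex := ⟨(0, fun _ => false), fun _ _ => rfl, ⟨0, fun _ _ => rfl⟩⟩


/-- `Aut(GP)` acts transitively on `GP`, the height `h(k,f) = k` is
`Aut(GP)`-difference-invariant, every vertex has neighbours of strictly smaller and
strictly larger height; consequently `(GPheight, Aut(GP))` is a graph height function. -/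
theorem statement_12 :
    (∀ u v : GPVertex, ∃ γ : GP ≃g GP, γ u = v) ∧
    (∀ γ : GP ≃g GP, ∀ u v : GPVertex,
      GPheight (γ v) - GPheight (γ u) = GPheight v - GPheight u) ∧
    (∀ v : GPVertex, ∃ u w : GPVertex, GP.Adj v u ∧ GP.Adj v w ∧
      GPheight u < GPheight v ∧ GPheight v < GPheight w) ∧
    IsGraphHeightFunction GP GPheight ⊤ := by
  have trans : ∀ u v : GPVertex, ∃ γ : GP ≃g GP, γ u = v := fun u v =>
    ⟨GPaux.transIso u v, GPaux.transIso_maps u v⟩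
  have nbhd : ∀ v : GPVertex, ∃ u w : GPVertex, GP.Adj v u ∧ GP.Adj v w ∧
      GPheight u < GPheight v ∧ GPheight v < GPheight w := by
    intro v
    refine ⟨GPpred v, GPaux.child false v, GPaux.adj_pred v, GPaux.adj_child false v, ?_, ?_⟩
    · show GPaux.ht (GPpred v) < GPaux.ht v
      rw [GPaux.ht_pred]; omega
    · show GPaux.ht v < GPaux.ht (GPaux.child false v)
      rw [GPaux.ht_child]; omega
  refine ⟨trans, GPaux.diff_invariant, nbhd, ?_, ?_, nbhd⟩
  · exact ⟨{GPv0}, fun v => ⟨GPaux.transIso GPv0 v, Subgroup.mem_top _,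
      GPv0, Finset.mem_singleton_self _, GPaux.transIso_maps GPv0 v⟩⟩
  · intro γ _ u v
    exact GPaux.diff_invariant γ u v
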